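/- Let n ≥ 0 and let G be a solvable group of isometries of the Euclidean space ℝⁿ (surjective self-isometries of ℝⁿ with the Euclidean distance). If G is a GAF then G is a GAG. -/

import Mathlib

open Metric Equiv
open scoped commutatorElement

attribute [local instance] Classical.propDecidable

namespace GafGagAux

variable {n : ℕ}

/-- The common fixed set of a set of permutations. -/
def fixset (S : Set (Equiv.Perm (EuclideanSpace ℝ (Fin n)))) : Set (EuclideanSpace ℝ (Fin n)) :=
  {x | ∀ g ∈ S, g x = x}

lemma fixset_antitone {S T : Set (Equiv.Perm (EuclideanSpace ℝ (Fin n)))} (h : S ⊆ T) :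
    fixset T ⊆ fixset S := fun _x hx g hg => hx g (h hg)

lemma exists_linear (g : Equiv.Perm (EuclideanSpace ℝ (Fin n)))
    (hg : ∀ x y, dist (g x) (g y) = dist x y) :
    ∃ L : EuclideanSpace ℝ (Fin n) →ₗ[ℝ] EuclideanSpace ℝ (Fin n), ∀ x, g x = L x + g 0 := by
  let e : EuclideanSpace ℝ (Fin n) ≃ᵢ EuclideanSpace ℝ (Fin n) :=
    ⟨g, Isometry.of_dist_eq hg⟩
  refine ⟨(e.toRealLinearIsometryEquiv.toLinearEquiv : _ →ₗ[ℝ] _), fun x => ?_⟩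
  show g x = e.toRealLinearIsometryEquiv x + g 0
  rw [e.toRealLinearIsometryEquiv_apply x]
  show g x = (g x - g 0) + g 0
  abel

lemma fixset_affine (S : Set (Equiv.Perm (EuclideanSpace ℝ (Fin n))))
    (hS : ∀ g ∈ S, ∀ x y, dist (g x) (g y) = dist x y) :
    ∃ A : AffineSubspace ℝ (EuclideanSpace ℝ (Fin n)), (A : Set (EuclideanSpace ℝ (Fin n))) = fixset S := by
  refine ⟨⟨fixset S, ?_⟩, rfl⟩
  intro c p1 p2 p3 h1 h2 h3 g hg
  obtain ⟨L, hL⟩ := exists_linear g (hS g hg)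
  have e1 := h1 g hg
  have e2 := h2 g hg
  have e3 := h3 g hg
  rw [hL] at e1 e2 e3
  show g (c • (p1 -ᵥ p2) +ᵥ p3) = _
  rw [hL]
  have hsub : L (p1 - p2) = p1 - p2 := by
    rw [map_sub]
    nth_rewrite 2 [← e1]
    nth_rewrite 2 [← e2]
    abel
  have h3' : L p3 = p3 - g 0 := eq_sub_of_add_eq e3
  simp only [vsub_eq_sub, vadd_eq_add, map_add, map_smul, hsub, h3']
  abel

lemma fixset_closed (S : Set (Equiv.Perm (EuclideanSpace ℝ (Fin n))))
    (hS : ∀ g ∈ S, ∀ x y, dist (g x) (g y) = dist x y) :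
    IsClosed (fixset S) := by
  have : fixset S = ⋂ g ∈ S, {x | g x = x} := by
    ext x; simp [fixset]
  rw [this]
  exact isClosed_biInter fun g hg =>
    isClosed_eq (Isometry.of_dist_eq (hS g hg)).continuous continuous_id

/-- Key lemma: an isometry with a fixed point which preserves a nonempty closed
midpoint-convex set has a fixed point in that set. -/
lemma exists_fixed_in_set (F : Set (EuclideanSpace ℝ (Fin n))) (hne : F.Nonempty)
    (hcl : IsClosed F) (hmid : ∀ u ∈ F, ∀ v ∈ F, midpoint ℝ u v ∈ F)
    (g : Equiv.Perm (EuclideanSpace ℝ (Fin n)))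
    (hg : ∀ x y, dist (g x) (g y) = dist x y)
    (hmap : ∀ x ∈ F, g x ∈ F)
    (x₀ : EuclideanSpace ℝ (Fin n)) (hx₀ : g x₀ = x₀) : ∃ y ∈ F, g y = y := by
  obtain ⟨y, hyF, hy⟩ := hcl.exists_infDist_eq_dist hne x₀
  refine ⟨y, hyF, ?_⟩
  have hgy : g y ∈ F := hmap y hyF
  have hd : dist x₀ (g y) = dist x₀ y := by
    calc dist x₀ (g y) = dist (g x₀) (g y) := by rw [hx₀]
    _ = dist x₀ y := hg x₀ y
  set m := midpoint ℝ y (g y) with hm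
  have hmF : m ∈ F := hmid y hyF (g y) hgy
  have h1 : dist x₀ y ≤ dist x₀ m := hy ▸ infDist_le_dist_of_mem hmF
  have hp := parallelogram_law_with_norm ℝ (x₀ - y) (x₀ - g y)
  have hmm : m + m = y + g y := midpoint_add_self ℝ y (g y)
  have e1 : x₀ - y + (x₀ - g y) = (2:ℝ) • (x₀ - m) := by
    have h' : x₀ - y + (x₀ - g y) = x₀ + x₀ - (y + g y) := by abel
    rw [h', ← hmm, two_smul]
    abel
  have e2 : x₀ - y - (x₀ - g y) = g y - y := by abel
  rw [e1, e2, norm_smul] at hp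
  have hn2 : ‖(2:ℝ)‖ = 2 := by norm_num
  rw [hn2] at hp
  have d1 : dist x₀ m = ‖x₀ - m‖ := dist_eq_norm _ _
  have d2 : dist x₀ y = ‖x₀ - y‖ := dist_eq_norm _ _
  have d3 : dist x₀ (g y) = ‖x₀ - g y‖ := dist_eq_norm _ _
  have hDD : ‖x₀ - g y‖ = ‖x₀ - y‖ := by rw [← d3, ← d2, hd]
  have h1' : ‖x₀ - y‖ ≤ ‖x₀ - m‖ := by rw [← d1, ← d2]; exact h1
  rw [hDD] at hp
  have hb2 : ‖g y - y‖ * ‖g y - y‖ ≤ 0 := by nlinarith [norm_nonneg (x₀ - y)]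
  have hb : ‖g y - y‖ = 0 := by
    have := mul_self_nonneg (‖g y - y‖)
    have : ‖g y - y‖ * ‖g y - y‖ = 0 := le_antisymm hb2 this
    exact mul_self_eq_zero.mp this
  have : g y - y = 0 := norm_eq_zero.mp hb
  exact sub_eq_zero.mp this
/-- Our own copy of the derived series of a subgroup, as subgroups of the ambient group. -/
def Dser {G : Type*} [Group G] (H : Subgroup G) : ℕ → Subgroup G
  | 0 => H
  | k + 1 => ⁅Dser H k, Dser H k⁆

lemma Dser_succ_eq {G : Type*} [Group G] (H : Subgroup G) (k : ℕ) :
    Dser H (k + 1) = Dser ⁅H, H⁆ k := by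
  induction k with
  | zero => rfl
  | succ k ih =>
    show ⁅Dser H (k+1), Dser H (k+1)⁆ = ⁅Dser ⁅H,H⁆ k, Dser ⁅H,H⁆ k⁆
    rw [ih]

lemma map_derivedSeries_eq_Dser {G : Type*} [Group G] (H : Subgroup G) (k : ℕ) :
    (derivedSeries H k).map H.subtype = Dser H k := by
  induction k with
  | zero =>
    show (⊤ : Subgroup H).map H.subtype = H
    rw [← MonoidHom.range_eq_map, Subgroup.subtype_range]
  | succ k ih =>
    rw [derivedSeries_succ, Subgroup.map_commutator, ih]
    rfl

lemma main_induction {n : ℕ} : ∀ (k : ℕ) (H : Subgroup (Equiv.Perm (EuclideanSpace ℝ (Fin n)))),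
    (∀ g ∈ H, ∀ x y, dist (g x) (g y) = dist x y) →
    (∀ g ∈ H, ∃ x, g x = x) →
    Dser H k = ⊥ → ∃ x, ∀ g ∈ H, g x = x := by
  intro k
  induction k with
  | zero =>
    intro H _ _ hbot
    refine ⟨0, fun g hg => ?_⟩
    have hH : H = ⊥ := hbot
    rw [hH, Subgroup.mem_bot] at hg
    rw [hg]
    rfl
  | succ k ih =>
    intro H hiso hgaf hbot
    set K : Subgroup (Equiv.Perm (EuclideanSpace ℝ (Fin n))) := ⁅H, H⁆ with hK
    have hKH : K ≤ H := by
      rw [hK, Subgroup.commutator_le]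
      intro a ha b hb
      rw [commutatorElement_def]
      exact H.mul_mem (H.mul_mem (H.mul_mem ha hb) (H.inv_mem ha)) (H.inv_mem hb)
    have hDK : Dser K k = ⊥ := by rw [← Dser_succ_eq]; exact hbot
    obtain ⟨x₀, hx₀⟩ := ih K (fun g hg => hiso g (hKH hg)) (fun g hg => hgaf g (hKH hg)) hDK
    -- conjugation stability of K under H
    have hconj : ∀ g ∈ H, ∀ c ∈ K, g⁻¹ * c * g ∈ K := by
      intro g hg c hc
      have hmapK : K.map (MulAut.conj g⁻¹).toMonoidHom ≤ K := by
        rw [hK, Subgroup.map_commutator]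
        refine Subgroup.commutator_mono ?_ ?_ <;>
        · rintro x ⟨a, ha, rfl⟩
          show g⁻¹ * a * (g⁻¹)⁻¹ ∈ H
          rw [inv_inv]
          exact H.mul_mem (H.mul_mem (H.inv_mem hg) ha) hg
      have hmem := hmapK ⟨c, hc, rfl⟩
      have hc' : (MulAut.conj g⁻¹).toMonoidHom c = g⁻¹ * c * g := by
        simp [MulAut.conj_apply]
      rwa [hc'] at hmem
    -- the fixed sets
    have hmemFS : ∀ (T : Finset (Equiv.Perm (EuclideanSpace ℝ (Fin n)))) (x),
        x ∈ GafGagAux.fixset ((K : Set (Equiv.Perm (EuclideanSpace ℝ (Fin n)))) ∪ (T : Set _)) ↔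
          (∀ c ∈ K, c x = x) ∧ (∀ h ∈ T, h x = x) := by
      intro T x
      constructor
      · intro hx
        exact ⟨fun c hc => hx c (Set.mem_union_left _ hc),
          fun h hh => hx h (Set.mem_union_right _ hh)⟩
      · rintro ⟨h1, h2⟩ g hg
        rcases (Set.mem_union _ _ _).mp hg with hg | hg
        · exact h1 g hg
        · exact h2 g hg
    have hisoFS : ∀ (T : Finset (Equiv.Perm (EuclideanSpace ℝ (Fin n)))),
        (T : Set (Equiv.Perm (EuclideanSpace ℝ (Fin n)))) ⊆ (H : Set (Equiv.Perm (EuclideanSpace ℝ (Fin n)))) →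
        ∀ g ∈ (K : Set (Equiv.Perm (EuclideanSpace ℝ (Fin n)))) ∪ (T : Set _),
          ∀ x y, dist (g x) (g y) = dist x y := by
      intro T hT g hg
      rcases (Set.mem_union _ _ _).mp hg with hg | hg
      · exact hiso g (hKH hg)
      · exact hiso g (hT hg)
    -- the step: adding one more element of H keeps the fixed set nonempty
    have step : ∀ (T : Finset (Equiv.Perm (EuclideanSpace ℝ (Fin n)))),
        (T : Set (Equiv.Perm (EuclideanSpace ℝ (Fin n)))) ⊆ (H : Set (Equiv.Perm (EuclideanSpace ℝ (Fin n)))) →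
        (GafGagAux.fixset ((K : Set (Equiv.Perm (EuclideanSpace ℝ (Fin n)))) ∪ (T : Set _))).Nonempty → ∀ g ∈ H,
        (GafGagAux.fixset ((K : Set (Equiv.Perm (EuclideanSpace ℝ (Fin n)))) ∪ ((insert g T : Finset _) : Set _))).Nonempty := by
      intro T hT hne g hg
      obtain ⟨A, hA⟩ := GafGagAux.fixset_affine _ (hisoFS T hT)
      set F := GafGagAux.fixset ((K : Set (Equiv.Perm (EuclideanSpace ℝ (Fin n)))) ∪ (T : Set _)) with hF
      have hmid : ∀ u ∈ F, ∀ v ∈ F, midpoint ℝ u v ∈ F := by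
        intro u hu v hv
        have hu' : u ∈ A := by rw [← hA] at hu; exact hu
        have hv' : v ∈ A := by rw [← hA] at hv; exact hv
        have hmem := A.smul_vsub_vadd_mem (1/2 : ℝ) hu' hv' hv'
        have heq : midpoint ℝ u v = (1/2 : ℝ) • (u -ᵥ v) +ᵥ v := by
          rw [midpoint_eq_smul_add, invOf_eq_inv]
          show (2:ℝ)⁻¹ • (u + v) = (1/2:ℝ) • (u - v) + v
          module
        rw [heq, ← hA]
        exact hmem
      have hclosed : IsClosed F := GafGagAux.fixset_closed _ (hisoFS T hT)
      have hmap : ∀ x ∈ F, g x ∈ F := by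
        intro x hx
        rw [hF, hmemFS] at hx ⊢
        obtain ⟨hxK, hxT⟩ := hx
        constructor
        · intro c hc
          have h1 : g⁻¹ * c * g ∈ K := hconj g hg c hc
          have h2 : (g⁻¹ * c * g) x = x := hxK _ h1
          have h3 : c (g x) = g ((g⁻¹ * c * g) x) := by
            simp [Equiv.Perm.mul_apply]
          rw [h3, h2]
        · intro h hh
          have hhH : h ∈ H := hT hh
          have hcK : ⁅h⁻¹, g⁻¹⁆ ∈ K :=
            Subgroup.commutator_mem_commutator (H.inv_mem hhH) (H.inv_mem hg)
          have hx1 : (⁅h⁻¹, g⁻¹⁆ : Equiv.Perm (EuclideanSpace ℝ (Fin n))) x = x := hxK _ hcK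
          have key : h * g = g * (h * ⁅h⁻¹, g⁻¹⁆) := by
            rw [commutatorElement_def]
            group
          have h4 : h (g x) = (h * g) x := rfl
          rw [h4, key]
          have h5 : (g * (h * ⁅h⁻¹, g⁻¹⁆)) x = g (h (⁅h⁻¹, g⁻¹⁆ x)) := by
            simp [Equiv.Perm.mul_apply]
          rw [h5, hx1, hxT h hh]
      obtain ⟨xg, hxgfix⟩ := hgaf g hg
      obtain ⟨y, hyF, hgy⟩ := GafGagAux.exists_fixed_in_set F hne hclosed hmid g
        (hiso g hg) hmap xg hxgfix
      refine ⟨y, ?_⟩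
      rw [hmemFS]
      rw [hF, hmemFS] at hyF
      refine ⟨hyF.1, fun h hh => ?_⟩
      rcases Finset.mem_insert.mp hh with rfl | hh
      · exact hgy
      · exact hyF.2 h hh
    -- minimal rank argument
    set 𝒟 : Set ℕ := {d | ∃ T : Finset (Equiv.Perm (EuclideanSpace ℝ (Fin n))),
      (T : Set (Equiv.Perm (EuclideanSpace ℝ (Fin n)))) ⊆ (H : Set (Equiv.Perm (EuclideanSpace ℝ (Fin n)))) ∧ (GafGagAux.fixset ((K : Set (Equiv.Perm (EuclideanSpace ℝ (Fin n)))) ∪ (T : Set _))).Nonempty ∧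
      Module.finrank ℝ
        (affineSpan ℝ (GafGagAux.fixset ((K : Set (Equiv.Perm (EuclideanSpace ℝ (Fin n)))) ∪ (T : Set _)))).direction = d} with h𝒟
    have h𝒟ne : 𝒟.Nonempty := by
      refine ⟨_, ∅, by simp, ⟨x₀, ?_⟩, rfl⟩
      rw [hmemFS]
      exact ⟨fun c hc => hx₀ c hc, by simp⟩
    obtain ⟨T, hTH, ⟨x, hxT⟩, hrkT⟩ := Nat.sInf_mem h𝒟ne
    refine ⟨x, fun g hg => ?_⟩
    have hne' := step T hTH ⟨x, hxT⟩ g hg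
    have hT'H : ((insert g T : Finset (Equiv.Perm (EuclideanSpace ℝ (Fin n)))) : Set _) ⊆
        (H : Set (Equiv.Perm (EuclideanSpace ℝ (Fin n)))) := by
      rw [Finset.coe_insert]
      exact Set.insert_subset hg hTH
    have hsub : GafGagAux.fixset ((K : Set (Equiv.Perm (EuclideanSpace ℝ (Fin n)))) ∪ ((insert g T : Finset _) : Set _)) ⊆
        GafGagAux.fixset ((K : Set (Equiv.Perm (EuclideanSpace ℝ (Fin n)))) ∪ (T : Set _)) := by
      apply GafGagAux.fixset_antitone
      apply Set.union_subset_union_right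
      rw [Finset.coe_insert]
      exact Set.subset_insert _ _
    have heqset : GafGagAux.fixset ((K : Set (Equiv.Perm (EuclideanSpace ℝ (Fin n)))) ∪ ((insert g T : Finset _) : Set _)) =
        GafGagAux.fixset ((K : Set (Equiv.Perm (EuclideanSpace ℝ (Fin n)))) ∪ (T : Set _)) := by
      by_contra hne2
      obtain ⟨A, hA⟩ := GafGagAux.fixset_affine _ (hisoFS T hTH)
      obtain ⟨A', hA'⟩ := GafGagAux.fixset_affine _ (hisoFS _ hT'H)
      have hle : A' ≤ A := by
        rw [← SetLike.coe_subset_coe, hA, hA']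
        exact hsub
      have hlt : A' < A := lt_of_le_of_ne hle (by
        intro h
        apply hne2
        rw [← hA', ← hA, h])
      have hdir : A'.direction < A.direction :=
        AffineSubspace.direction_lt_of_nonempty hlt (by rw [hA']; exact hne')
      have hfin : Module.finrank ℝ A'.direction < Module.finrank ℝ A.direction :=
        Submodule.finrank_lt_finrank_of_lt hdir
      have hspan' : affineSpan ℝ (GafGagAux.fixset ((K : Set (Equiv.Perm (EuclideanSpace ℝ (Fin n)))) ∪
          ((insert g T : Finset _) : Set _))) = A' := by
        rw [← hA', AffineSubspace.affineSpan_coe]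
      have hspan : affineSpan ℝ (GafGagAux.fixset ((K : Set (Equiv.Perm (EuclideanSpace ℝ (Fin n)))) ∪ (T : Set _))) = A := by
        rw [← hA, AffineSubspace.affineSpan_coe]
      have hmem𝒟 : Module.finrank ℝ (affineSpan ℝ (GafGagAux.fixset ((K : Set (Equiv.Perm (EuclideanSpace ℝ (Fin n)))) ∪
          ((insert g T : Finset _) : Set _)))).direction ∈ 𝒟 := ⟨insert g T, hT'H, hne', rfl⟩
      have hge := Nat.sInf_le hmem𝒟
      rw [hspan'] at hge
      rw [hspan] at hrkT
      omega
    rw [← heqset] at hxT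
    exact ((hmemFS _ x).mp hxT).2 g (Finset.mem_insert_self g T)

end GafGagAux

/-- A solvable group of isometries of the Euclidean space `ℝⁿ` which is a GAF
(every element has a fixed point) is a GAG (has a common fixed point). -/
theorem solvable_isometry_group_euclidean_gaf_gag
    (n : ℕ)
    (G : Subgroup (Equiv.Perm (EuclideanSpace ℝ (Fin n))))
    (hiso : ∀ g ∈ G, ∀ x y : EuclideanSpace ℝ (Fin n), dist (g x) (g y) = dist x y)
    (hsolv : IsSolvable G)
    (hGAF : ∀ g ∈ G, ∃ x : EuclideanSpace ℝ (Fin n), g x = x) :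
    ∃ x : EuclideanSpace ℝ (Fin n), ∀ g ∈ G, g x = x := by
  obtain ⟨k, hk⟩ := hsolv.solvable
  have hD : GafGagAux.Dser G k = ⊥ := by
    rw [← GafGagAux.map_derivedSeries_eq_Dser, hk, Subgroup.map_bot]
  exact GafGagAux.main_induction k G hiso hGAF hD
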